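/- Let P be a symmetric positive definite n×n real matrix with maximal eigenvalue λ. The function γ(θ) = -log det(I - θP) + tr((I - θP)^{-1} - I) is strictly monotone increasing on the interval (0, 1/λ). -/

import Mathlib

open Matrix

private lemma strictAnti_aux : StrictAntiOn (fun x : ℝ => -Real.log x + x⁻¹) (Set.Ioi 0) := by
  apply strictAntiOn_of_deriv_neg (convex_Ioi 0)
  · apply ContinuousOn.add
    · exact (Real.continuousOn_log.mono (by intro x hx; exact ne_of_gt hx)).neg
    · exact continuousOn_inv₀.mono (by intro x hx; exact ne_of_gt hx)
  · intro x hx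
    rw [interior_Ioi] at hx
    have hx0 : x ≠ 0 := ne_of_gt hx
    have hd : HasDerivAt (fun x : ℝ => -Real.log x + x⁻¹) (-x⁻¹ + -(x ^ 2)⁻¹) x :=
      (Real.hasDerivAt_log hx0).neg.add (hasDerivAt_inv hx0)
    rw [hd.deriv]
    have h1 : 0 < x⁻¹ := inv_pos.mpr hx
    have h2 : 0 < (x ^ 2)⁻¹ := inv_pos.mpr (by positivity)
    linarith

/-- γ(θ) = -log det(I - θP) + tr((I - θP)⁻¹ - I) is strictly monotone increasing on (0, 1/λ). -/
theorem stmt_1 {n : ℕ} (P : Matrix (Fin n) (Fin n) ℝ) (hP : P.PosDef)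
    (lam : ℝ) (hlam : IsGreatest (Set.range hP.1.eigenvalues) lam) :
    StrictMonoOn
      (fun θ : ℝ => -Real.log ((1 - θ • P).det) + Matrix.trace ((1 - θ • P)⁻¹ - 1))
      (Set.Ioo 0 (1 / lam)) := by
  have hH := hP.1
  set μ := hH.eigenvalues with hμdef
  obtain ⟨i0, hi0⟩ := hlam.1
  have hμpos : ∀ i, 0 < μ i := hP.eigenvalues_pos
  have hμle : ∀ i, μ i ≤ lam := fun i => hlam.2 ⟨i, rfl⟩
  have hlampos : 0 < lam := hi0 ▸ hμpos i0
  set U : Matrix (Fin n) (Fin n) ℝ := (hH.eigenvectorUnitary : Matrix (Fin n) (Fin n) ℝ) with hUdef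
  have hUU : U * star U = 1 := Matrix.mem_unitaryGroup_iff.mp (hH.eigenvectorUnitary).2
  have hUU' : star U * U = 1 := Matrix.mem_unitaryGroup_iff'.mp (hH.eigenvectorUnitary).2
  -- positivity of 1 - θ μ i on the interval
  have hbound : ∀ θ ∈ Set.Ioo (0:ℝ) (1/lam), ∀ i, 0 < 1 - θ * μ i := by
    intro θ hθ i
    have h1 : θ * μ i ≤ θ * lam := mul_le_mul_of_nonneg_left (hμle i) (le_of_lt hθ.1)
    have h2 : θ * lam < (1/lam) * lam := by
      exact mul_lt_mul_of_pos_right hθ.2 hlampos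
    rw [one_div_mul_cancel (ne_of_gt hlampos)] at h2
    linarith
  -- key sum formula
  have key : ∀ θ ∈ Set.Ioo (0:ℝ) (1/lam),
      (-Real.log ((1 - θ • P).det) + Matrix.trace ((1 - θ • P)⁻¹ - 1))
      = (∑ i, (-Real.log (1 - θ * μ i) + (1 - θ * μ i)⁻¹)) - n := by
    intro θ hθ
    have hpos := hbound θ hθ
    have hne : ∀ i, 1 - θ * μ i ≠ 0 := fun i => ne_of_gt (hpos i)
    have hdecomp : (1 : Matrix (Fin n) (Fin n) ℝ) - θ • P
        = U * diagonal (fun i => 1 - θ * μ i) * star U := by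
      have hspec : P = U * diagonal μ * star U := by
        have := hH.spectral_theorem
        simpa [hUdef] using this
      have hdiag : diagonal (fun i => 1 - θ * μ i)
          = (1 : Matrix (Fin n) (Fin n) ℝ) - θ • diagonal μ := by
        rw [← diagonal_one, ← diagonal_smul, ← diagonal_sub]
        rfl
      rw [hdiag, Matrix.mul_sub, Matrix.sub_mul, Matrix.mul_one, hUU,
        Matrix.mul_smul, Matrix.smul_mul, hspec]
    have hdet : (1 - θ • P).det = ∏ i, (1 - θ * μ i) := by
      rw [hdecomp, det_mul_right_comm, hUU, one_mul, det_diagonal]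
    have hinvdiag : (diagonal (fun i => 1 - θ * μ i))⁻¹
        = diagonal (fun i => (1 - θ * μ i)⁻¹) := by
      apply Matrix.inv_eq_right_inv
      rw [Matrix.diagonal_mul_diagonal, ← Matrix.diagonal_one]
      have h : (fun i => (1 - θ * μ i) * (1 - θ * μ i)⁻¹) = fun _ => (1:ℝ) :=
        funext fun i => mul_inv_cancel₀ (hne i)
      rw [h]
    have hinv : (1 - θ • P)⁻¹ = U * diagonal (fun i => (1 - θ * μ i)⁻¹) * star U := by
      rw [hdecomp, Matrix.mul_inv_rev, Matrix.mul_inv_rev,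
        Matrix.inv_eq_left_inv hUU, Matrix.inv_eq_left_inv hUU', hinvdiag, mul_assoc]
    have htr : Matrix.trace ((1 - θ • P)⁻¹) = ∑ i, (1 - θ * μ i)⁻¹ := by
      rw [hinv, trace_mul_cycle, hUU', one_mul, trace_diagonal]
    have hlog : Real.log ((1 - θ • P).det) = ∑ i, Real.log (1 - θ * μ i) := by
      rw [hdet, Real.log_prod (fun i _ => hne i)]
    rw [trace_sub, trace_one, hlog, htr, Fintype.card_fin, Finset.sum_add_distrib,
      Finset.sum_neg_distrib]
    ring
  intro a ha b hb hab
  simp only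
  rw [key a ha, key b hb]
  have hne : (Finset.univ : Finset (Fin n)).Nonempty := ⟨i0, Finset.mem_univ i0⟩
  have hsum : ∑ i, (-Real.log (1 - a * μ i) + (1 - a * μ i)⁻¹)
      < ∑ i, (-Real.log (1 - b * μ i) + (1 - b * μ i)⁻¹) := by
    apply Finset.sum_lt_sum_of_nonempty hne
    intro i _
    have h1 : (0:ℝ) < 1 - b * μ i := hbound b hb i
    have h2 : 1 - b * μ i < 1 - a * μ i := by
      have := mul_lt_mul_of_pos_right hab (hμpos i)
      linarith
    exact strictAnti_aux (Set.mem_Ioi.mpr h1) (Set.mem_Ioi.mpr (lt_trans h1 h2)) h2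
  linarith
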